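/- Let Z be a real-valued random variable and let F : ℝ → [0,1] be nonincreasing and left-continuous with lim_{x→−∞} F(x) = 1 and lim_{x→+∞} F(x) = 0 (so that 1 − F is the distribution function of some real random variable, with F(x) = P(·≥x)). Assume P(Z ≥ x) ≤ F(x) for all x ∈ ℝ. Let V be uniformly distributed on [0,1] and independent of Z. Then there exists a Borel measurable function g : ℝ × [0,1] → ℝ such that the random variable X := g(Z, V) satisfies Z ≤ X almost surely and P(X ≥ x) = F(x) for every x ∈ ℝ. -/

import Mathlib

open MeasureTheory ProbabilityTheory Filter Set
open scoped ENNReal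

namespace TailBoundAux

/-- The set of `ω` whose value `Z ω` is such that `{Z ≥ Z ω}` is null, is null. -/
lemma null_upper {Ω : Type*} [MeasurableSpace Ω] (μ : Measure Ω) (Z : Ω → ℝ) :
    μ {ω | μ {ω' | Z ω ≤ Z ω'} = 0} = 0 := by
  set A : Set ℝ := {z | μ {ω' | z ≤ Z ω'} = 0} with hA
  have hup : ∀ z ∈ A, ∀ z', z ≤ z' → z' ∈ A := by
    intro z hz z' hzz'
    exact measure_mono_null (fun ω h => hzz'.trans h) hz
  set U : Set Ω := ⋃ (r : ℚ) (_ : (r : ℝ) ∈ A), {ω | (r : ℝ) ≤ Z ω} with hU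
  have hUnull : μ U = 0 := measure_iUnion_null fun r => measure_iUnion_null fun hr => hr
  have hsplit : {ω | Z ω ∈ A} ⊆ U ∪ ({ω | Z ω ∈ A} \ U) := fun ω hω => by
    by_cases h : ω ∈ U
    · exact Or.inl h
    · exact Or.inr ⟨hω, h⟩
  refine measure_mono_null hsplit (measure_union_null hUnull ?_)
  rcases Set.eq_empty_or_nonempty ({ω | Z ω ∈ A} \ U) with he | ⟨ω₀, hω₀⟩
  · simp [he]
  · have hsub : {ω | Z ω ∈ A} \ U ⊆ {ω | Z ω₀ ≤ Z ω} := by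
      intro ω hω
      simp only [Set.mem_setOf_eq]
      by_contra hlt
      push_neg at hlt
      obtain ⟨r, hr1, hr2⟩ := exists_rat_btwn hlt
      have hrA : (r : ℝ) ∈ A := hup _ hω.1 _ hr1.le
      exact hω₀.2 (Set.mem_iUnion.2 ⟨r, Set.mem_iUnion.2 ⟨hrA, hr2.le⟩⟩)
    exact measure_mono_null hsub hω₀.1

lemma null_lower {Ω : Type*} [MeasurableSpace Ω] (μ : Measure Ω) (Z : Ω → ℝ) :
    μ {ω | μ {ω' | Z ω' ≤ Z ω} = 0} = 0 := by
  have h := null_upper μ (fun ω => -Z ω)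
  simpa [neg_le_neg_iff] using h

/-- Galois-type correspondence for the generalized inverse of a survival function. -/
lemma galois {F : ℝ → ℝ} (hFanti : Antitone F)
    (hFleft : ∀ x, ContinuousWithinAt F (Set.Iio x) x)
    (hFbot : Tendsto F atBot (nhds 1)) (hFtop : Tendsto F atTop (nhds 0))
    {u : ℝ} (h0 : 0 < u) (h1 : u < 1) (x : ℝ) :
    x ≤ sSup {y | u ≤ F y} ↔ u ≤ F x := by
  have hne : {y | u ≤ F y}.Nonempty := by
    have hev : ∀ᶠ z in atBot, u < F z := hFbot.eventually (eventually_gt_nhds h1)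
    obtain ⟨z, hz⟩ := hev.exists
    exact ⟨z, hz.le⟩
  have hbdd : BddAbove {y | u ≤ F y} := by
    have hev : ∀ᶠ z in atTop, F z < u := hFtop.eventually (eventually_lt_nhds h0)
    obtain ⟨z₀, hz₀⟩ := eventually_atTop.1 hev
    refine ⟨z₀, fun y hy => ?_⟩
    by_contra hy'
    push_neg at hy'
    exact absurd hy (not_le.2 (hz₀ y hy'.le))
  constructor
  · intro h
    have hev : ∀ᶠ y in nhdsWithin x (Set.Iio x), u ≤ F y := by
      filter_upwards [self_mem_nhdsWithin] with y hy
      obtain ⟨s, hs, hys⟩ := exists_lt_of_lt_csSup hne (lt_of_lt_of_le hy h)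
      exact le_trans hs (hFanti hys.le)
    exact ge_of_tendsto (hFleft x) hev
  · intro h
    exact le_csSup hbdd h

end TailBoundAux

/-- **Lemma 4.9 (tailBound).** If the upper tail of `Z` is dominated by a
survival function `F` (nonincreasing, left-continuous, `F → 1` at `-∞` and
`F → 0` at `+∞`, taking values in `[0,1]`), and `V` is uniform on `[0,1]`
independent of `Z`, then there is a measurable function `g` of `(Z, V)` whose
value dominates `Z` a.s. and whose survival function is exactly `F`. -/
theorem exists_dominating_with_survival_function
    {Ω : Type*} [MeasurableSpace Ω] (μ : Measure Ω) [IsProbabilityMeasure μ]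
    (Z V : Ω → ℝ) (hZ : Measurable Z) (hV : Measurable V)
    (hVunif : Measure.map V μ = volume.restrict (Set.Icc (0:ℝ) 1))
    (hindep : IndepFun Z V μ)
    (F : ℝ → ℝ) (hF01 : ∀ x, F x ∈ Set.Icc (0:ℝ) 1)
    (hFanti : Antitone F)
    (hFleft : ∀ x, ContinuousWithinAt F (Set.Iio x) x)
    (hFbot : Tendsto F atBot (nhds 1)) (hFtop : Tendsto F atTop (nhds 0))
    (hdom : ∀ x : ℝ, (μ {ω | x ≤ Z ω}).toReal ≤ F x) :
    ∃ g : ℝ × ℝ → ℝ, Measurable g ∧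
      (∀ᵐ ω ∂μ, Z ω ≤ g (Z ω, V ω)) ∧
      ∀ x : ℝ, (μ {ω | x ≤ g (Z ω, V ω)}).toReal = F x := by
  classical
  set Gf : ℝ → ℝ := fun z => (μ {ω | z ≤ Z ω}).toReal with hGf
  set Hf : ℝ → ℝ := fun z => (μ {ω | z < Z ω}).toReal with hHf
  have hfin : ∀ s : Set Ω, μ s ≠ ⊤ := fun s => measure_ne_top μ s
  have hmeasIci : ∀ z : ℝ, MeasurableSet {ω | z ≤ Z ω} := fun z => hZ measurableSet_Ici
  have hmeasIoi : ∀ z : ℝ, MeasurableSet {ω | z < Z ω} := fun z => hZ measurableSet_Ioi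
  have hGanti : Antitone Gf := fun a b hab =>
    ENNReal.toReal_mono (hfin _) (measure_mono fun ω h => hab.trans h)
  have hHanti : Antitone Hf := fun a b hab =>
    ENNReal.toReal_mono (hfin _) (measure_mono fun ω h => lt_of_le_of_lt hab h)
  have hHG : ∀ z, Hf z ≤ Gf z := fun z =>
    ENNReal.toReal_mono (hfin _) (measure_mono fun ω (h : z < Z ω) => h.le)
  have hG1 : ∀ z, Gf z ≤ 1 := fun z => by
    simpa using ENNReal.toReal_mono ENNReal.one_ne_top (prob_le_one (μ := μ))
  have hH0 : ∀ z, 0 ≤ Hf z := fun z => ENNReal.toReal_nonneg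
  have hG0 : ∀ z, 0 ≤ Gf z := fun z => ENNReal.toReal_nonneg
  have hgap : ∀ {a b : ℝ}, a < b → Gf b ≤ Hf a := fun {a b} hab =>
    ENNReal.toReal_mono (hfin _) (measure_mono fun ω h => lt_of_lt_of_le hab h)
  have hGof : ∀ z, μ {ω | z ≤ Z ω} = ENNReal.ofReal (Gf z) := fun z =>
    (ENNReal.ofReal_toReal (hfin _)).symm
  have hHof : ∀ z, μ {ω | z < Z ω} = ENNReal.ofReal (Hf z) := fun z =>
    (ENNReal.ofReal_toReal (hfin _)).symm
  have hGmeas : Measurable Gf := hGanti.measurable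
  have hHmeas : Measurable Hf := hHanti.measurable
  -- clamp to [0,1]
  set cl : ℝ → ℝ := fun v => max 0 (min v 1) with hcl
  have hclmeas : Measurable cl := measurable_const.max (measurable_id.min measurable_const)
  have hclid : ∀ v ∈ Icc (0:ℝ) 1, cl v = v := by
    intro v hv
    simp only [hcl, min_eq_left hv.2, max_eq_right hv.1]
  have hcl01 : ∀ v, cl v ∈ Icc (0:ℝ) 1 :=
    fun v => ⟨le_max_left _ _, max_le (by norm_num) (min_le_right _ _)⟩
  -- randomized survival value
  set w : ℝ → ℝ → ℝ := fun z v => Hf z + cl v * (Gf z - Hf z) with hw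
  have hwH : ∀ z v, Hf z ≤ w z v := fun z v =>
    le_add_of_nonneg_right (mul_nonneg (hcl01 v).1 (sub_nonneg.2 (hHG z)))
  have hwG : ∀ z v, w z v ≤ Gf z := by
    intro z v
    have h1 : cl v * (Gf z - Hf z) ≤ 1 * (Gf z - Hf z) :=
      mul_le_mul_of_nonneg_right (hcl01 v).2 (sub_nonneg.2 (hHG z))
    simp only [hw]
    nlinarith
  -- generalized inverse of F
  set q : ℝ → ℝ := fun u => if 0 < u ∧ u < 1 then sSup {y | u ≤ F y} else 0 with hq
  have hgal : ∀ u, 0 < u → u < 1 → ∀ x' : ℝ, (x' ≤ q u ↔ u ≤ F x') := by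
    intro u h0 h1 x'
    simp only [hq, if_pos (And.intro h0 h1)]
    exact TailBoundAux.galois hFanti hFleft hFbot hFtop h0 h1 x'
  have hqmeas : Measurable q := by
    apply measurable_of_Ici
    intro x
    have hpre : q ⁻¹' Ici x =
        (Ioo (0:ℝ) 1 ∩ Iic (F x)) ∪ (if x ≤ 0 then (Ioo (0:ℝ) 1)ᶜ else ∅) := by
      ext u
      by_cases hu : 0 < u ∧ u < 1
      · have hqq : (x ≤ q u) ↔ u ≤ F x := hgal u hu.1 hu.2 x
        simp only [Set.mem_preimage, Set.mem_Ici, Set.mem_union, Set.mem_inter_iff,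
          Set.mem_Ioo, Set.mem_Iic, hqq]
        constructor
        · intro h; exact Or.inl ⟨⟨hu.1, hu.2⟩, h⟩
        · rintro (⟨_, h⟩ | h)
          · exact h
          · exfalso
            split_ifs at h
            · exact h (Set.mem_Ioo.2 ⟨hu.1, hu.2⟩)
            · exact h
      · have hqu : q u = 0 := by simp only [hq, if_neg hu]
        simp only [Set.mem_preimage, Set.mem_Ici, hqu, Set.mem_union, Set.mem_inter_iff,
          Set.mem_Ioo, Set.mem_Iic]
        constructor
        · intro h
          refine Or.inr ?_
          rw [if_pos h]
          intro hmem
          exact hu (Set.mem_Ioo.1 hmem)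
        · rintro (⟨h1, _⟩ | h)
          · exact absurd h1 hu
          · split_ifs at h with hx
            · exact hx
            · exact absurd h (notMem_empty u)
    rw [hpre]
    refine (measurableSet_Ioo.inter measurableSet_Iic).union ?_
    split_ifs
    · exact measurableSet_Ioo.compl
    · exact MeasurableSet.empty
  -- measurability of the pieces
  have hwpmeas : Measurable (fun p : ℝ × ℝ => w p.1 p.2) := by
    apply Measurable.add
    · exact hHmeas.comp measurable_fst
    · exact (hclmeas.comp measurable_snd).mul
        ((hGmeas.comp measurable_fst).sub (hHmeas.comp measurable_fst))
  -- THE KEY: distributional transform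
  have key : ∀ t : ℝ, 0 ≤ t → t ≤ 1 →
      μ {ω | w (Z ω) (V ω) ≤ t} = ENNReal.ofReal t := by
    intro t ht0 ht1
    set ν : Measure ℝ := Measure.map Z μ with hν
    set lam : Measure ℝ := volume.restrict (Icc (0:ℝ) 1) with hlam
    have hjoint : Measure.map (fun ω => (Z ω, V ω)) μ = ν.prod lam := by
      rw [← hVunif]
      exact (indepFun_iff_map_prod_eq_prod_map_map hZ.aemeasurable hV.aemeasurable).1 hindep
    have hSmeas : MeasurableSet {p : ℝ × ℝ | w p.1 p.2 ≤ t} := hwpmeas measurableSet_Iic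
    have hstep1 : μ {ω | w (Z ω) (V ω) ≤ t}
        = (ν.prod lam) {p : ℝ × ℝ | w p.1 p.2 ≤ t} := by
      rw [← hjoint, Measure.map_apply (hZ.prodMk hV) hSmeas]
      rfl
    have hstep2 : (ν.prod lam) {p : ℝ × ℝ | w p.1 p.2 ≤ t}
        = ∫⁻ z, lam {v | w z v ≤ t} ∂ν := by
      rw [Measure.prod_apply hSmeas]
      rfl
    -- inner (fiberwise) measure
    have hinner : ∀ z, lam {v | w z v ≤ t} =
        if Gf z ≤ t then 1
        else if Hf z ≤ t then ENNReal.ofReal ((t - Hf z) / (Gf z - Hf z)) else 0 := by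
      intro z
      have hres : lam {v | w z v ≤ t} = volume ({v | w z v ≤ t} ∩ Icc 0 1) :=
        Measure.restrict_apply' measurableSet_Icc
      by_cases h1 : Gf z ≤ t
      · rw [if_pos h1, hres]
        have hEq : {v | w z v ≤ t} ∩ Icc (0:ℝ) 1 = Icc (0:ℝ) 1 := by
          refine Set.inter_eq_right.2 fun v hv => ?_
          exact le_trans (hwG z v) h1
        rw [hEq, Real.volume_Icc]
        norm_num
      · by_cases h2 : Hf z ≤ t
        · rw [if_neg h1, if_pos h2, hres]
          have hlt : t < Gf z := not_le.1 h1
          have ha : 0 < Gf z - Hf z := by linarith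
          set r : ℝ := (t - Hf z) / (Gf z - Hf z) with hr
          have hr0 : 0 ≤ r := div_nonneg (by linarith) ha.le
          have hr1 : r < 1 := (div_lt_one ha).2 (by linarith)
          have hEq : {v | w z v ≤ t} ∩ Icc (0:ℝ) 1 = Icc 0 r := by
            ext v
            simp only [Set.mem_inter_iff, Set.mem_setOf_eq, Set.mem_Icc]
            constructor
            · rintro ⟨hwv, hv0, hv1⟩
              have hclv : cl v = v := hclid v ⟨hv0, hv1⟩
              rw [hw] at hwv
              simp only [hclv] at hwv
              refine ⟨hv0, ?_⟩
              rw [hr, le_div_iff₀ ha]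
              linarith
            · rintro ⟨hv0, hvr⟩
              have hv1 : v ≤ 1 := hvr.trans hr1.le
              have hclv : cl v = v := hclid v ⟨hv0, hv1⟩
              refine ⟨?_, hv0, hv1⟩
              show Hf z + cl v * (Gf z - Hf z) ≤ t
              rw [hclv]
              have : v * (Gf z - Hf z) ≤ r * (Gf z - Hf z) :=
                mul_le_mul_of_nonneg_right hvr ha.le
              have hrm : r * (Gf z - Hf z) = t - Hf z := by
                rw [hr]; field_simp
              linarith
          rw [hEq, Real.volume_Icc, sub_zero]
        · rw [if_neg h1, if_neg h2, hres]
          have hEq : {v | w z v ≤ t} ∩ Icc (0:ℝ) 1 = ∅ := by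
            refine Set.eq_empty_iff_forall_notMem.2 fun v hv => ?_
            have := hwH z v
            have hwv : w z v ≤ t := hv.1
            exact h2 (le_trans this hwv)
          rw [hEq]
          simp
    -- the sets D and M
    set D : Set ℝ := {z | Gf z ≤ t} with hD
    set M : Set ℝ := {z | Hf z ≤ t ∧ ¬ Gf z ≤ t} with hM
    have hDmeas : MeasurableSet D := hGmeas measurableSet_Iic
    have hMsub : M.Subsingleton := by
      intro z₁ h₁ z₂ h₂
      by_contra hne
      rcases lt_or_gt_of_ne hne with hlt | hlt
      · exact h₂.2 (le_trans (hgap hlt) h₁.1)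
      · exact h₁.2 (le_trans (hgap hlt) h₂.1)
    have hDup : ∀ z ∈ D, ∀ z', z ≤ z' → z' ∈ D := fun z hz z' hzz' =>
      le_trans (hGanti hzz') hz
    have hνD : ν D = μ {ω | Gf (Z ω) ≤ t} := Measure.map_apply hZ hDmeas
    have hrw : ∫⁻ z, lam {v | w z v ≤ t} ∂ν
        = ∫⁻ z, (if Gf z ≤ t then 1
            else if Hf z ≤ t then ENNReal.ofReal ((t - Hf z) / (Gf z - Hf z)) else 0) ∂ν :=
      lintegral_congr hinner
    rw [hstep1, hstep2, hrw]
    rcases Set.eq_empty_or_nonempty M with hMe | ⟨c, hc⟩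
    · -- no atom straddles level t
      have hIeq : ∀ z, (if Gf z ≤ t then (1:ℝ≥0∞)
          else if Hf z ≤ t then ENNReal.ofReal ((t - Hf z) / (Gf z - Hf z)) else 0)
          = D.indicator (fun _ => (1:ℝ≥0∞)) z := by
        intro z
        by_cases hz : Gf z ≤ t
        · rw [if_pos hz, Set.indicator_of_mem (show z ∈ D from hz)]
        · rw [if_neg hz, Set.indicator_of_notMem (show z ∉ D from hz)]
          have hz2 : ¬ Hf z ≤ t := by
            intro h2
            have hzM : z ∈ M := ⟨h2, hz⟩
            rw [hMe] at hzM
            exact notMem_empty z hzM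
          rw [if_neg hz2]
      rw [lintegral_congr hIeq, lintegral_indicator_const hDmeas, one_mul]
      -- D = {Hf ≤ t} as well
      have hDH : D = {z | Hf z ≤ t} := by
        ext z
        constructor
        · intro hz; exact le_trans (hHG z) hz
        · intro hz
          by_contra hzc
          have hzM : z ∈ M := ⟨hz, hzc⟩
          rw [hMe] at hzM
          exact notMem_empty z hzM
      rcases Set.eq_empty_or_nonempty D with hDe | ⟨z₀, hz₀⟩
      · -- t must be 0
        have hcap : (⋂ n : ℕ, {ω | (n:ℝ) < Z ω}) = ∅ := by
          refine Set.eq_empty_iff_forall_notMem.2 fun ω hω => ?_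
          obtain ⟨n, hn⟩ := exists_nat_gt (Z ω)
          exact absurd (Set.mem_iInter.1 hω n) (not_lt.2 hn.le)
        have hanti : Antitone (fun n : ℕ => {ω | (n:ℝ) < Z ω}) := by
          intro n m hnm ω hω
          simp only [Set.mem_setOf_eq] at hω ⊢
          exact lt_of_le_of_lt (Nat.cast_le.2 hnm) hω
        have hiInf : μ (⋂ n : ℕ, {ω | (n:ℝ) < Z ω}) = ⨅ n : ℕ, μ {ω | (n:ℝ) < Z ω} :=
          hanti.measure_iInter (fun n => (hmeasIoi _).nullMeasurableSet) ⟨0, hfin _⟩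
        have hle : ENNReal.ofReal t ≤ 0 := by
          rw [← measure_empty (μ := μ), ← hcap, hiInf]
          refine le_iInf fun n => ?_
          have hnD : ((n:ℝ)) ∉ D := hDe ▸ notMem_empty _
          rw [hDH] at hnD
          have : t < Hf n := not_le.1 hnD
          rw [hHof]
          exact ENNReal.ofReal_le_ofReal this.le
        have ht0' : ENNReal.ofReal t = 0 := le_antisymm hle zero_le
        rw [ht0', hDe]
        simp
      · by_cases hDuniv : D = univ
        · -- t must be 1
          have huniv : (⋃ n : ℕ, {ω | (-(n:ℝ)) ≤ Z ω}) = univ := by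
            refine Set.eq_univ_iff_forall.2 fun ω => ?_
            obtain ⟨n, hn⟩ := exists_nat_ge (-(Z ω))
            exact Set.mem_iUnion.2 ⟨n, by simpa using neg_le.1 hn⟩
          have hmono : Monotone (fun n : ℕ => {ω | (-(n:ℝ)) ≤ Z ω}) := by
            intro n m hnm ω hω
            simp only [Set.mem_setOf_eq] at hω ⊢
            exact le_trans (neg_le_neg (Nat.cast_le.2 hnm)) hω
          have hsup : μ (⋃ n : ℕ, {ω | (-(n:ℝ)) ≤ Z ω}) = ⨆ n : ℕ, μ {ω | (-(n:ℝ)) ≤ Z ω} :=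
            hmono.directed_le.measure_iUnion
          have hge : (1:ℝ≥0∞) ≤ ENNReal.ofReal t := by
            rw [← measure_univ (μ := μ), ← huniv, hsup]
            refine iSup_le fun n => ?_
            have : (-(n:ℝ)) ∈ D := hDuniv ▸ mem_univ _
            rw [hGof]
            exact ENNReal.ofReal_le_ofReal this
          have : ENNReal.ofReal t = 1 :=
            le_antisymm (by simpa using ENNReal.ofReal_le_ofReal ht1) hge
          rw [this, hDuniv]
          have : ν univ = 1 := by
            rw [hν, Measure.map_apply hZ MeasurableSet.univ]
            simp
          rw [this]
        · -- interesting case: D = Ici c for c = sInf D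
          have hbdd : BddBelow D := by
            obtain ⟨z₁, hz₁⟩ : ∃ z₁, z₁ ∉ D := by
              by_contra hcon
              push_neg at hcon
              exact hDuniv (Set.eq_univ_iff_forall.2 hcon)
            refine ⟨z₁, fun z hz => ?_⟩
            by_contra hlt
            push_neg at hlt
            exact hz₁ (hDup z hz z₁ hlt.le)
          set c : ℝ := sInf D with hcdef
          have hcI : ∀ n : ℕ, c + 1/(n+1 : ℝ) ∈ D := by
            intro n
            have hpos : (0:ℝ) < 1/(n+1 : ℝ) := by positivity
            have hlt : sInf D < c + 1/(n+1 : ℝ) := by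
              rw [← hcdef]; linarith
            obtain ⟨z, hzD, hzlt⟩ := exists_lt_of_csInf_lt ⟨z₀, hz₀⟩ hlt
            exact hDup z hzD _ hzlt.le
          have hunion : {ω | c < Z ω} = ⋃ n : ℕ, {ω | c + 1/(n+1 : ℝ) ≤ Z ω} := by
            ext ω
            simp only [Set.mem_setOf_eq, Set.mem_iUnion]
            constructor
            · intro h
              obtain ⟨n, hn⟩ := exists_nat_one_div_lt (sub_pos.2 h)
              exact ⟨n, by linarith⟩
            · rintro ⟨n, hn⟩
              have hpos : (0:ℝ) < 1/(n+1 : ℝ) := by positivity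
              linarith
          have hmono : Monotone (fun n : ℕ => {ω | c + 1/(n+1 : ℝ) ≤ Z ω}) := by
            intro n m hnm ω hω
            have : 1/((m:ℝ)+1) ≤ 1/((n:ℝ)+1) := by
              apply one_div_le_one_div_of_le
              · positivity
              · exact_mod_cast (Nat.add_le_add_right hnm 1 : n + 1 ≤ m + 1)
            simp only [Set.mem_setOf_eq] at hω ⊢
            linarith
          have hHc : μ {ω | c < Z ω} ≤ ENNReal.ofReal t := by
            rw [hunion, hmono.directed_le.measure_iUnion]
            refine iSup_le fun n => ?_
            rw [hGof]
            exact ENNReal.ofReal_le_ofReal (hcI n)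
          have hHcle : Hf c ≤ t := by
            have := ENNReal.toReal_mono ENNReal.ofReal_ne_top hHc
            rwa [ENNReal.toReal_ofReal ht0] at this
          have hcD : c ∈ D := by
            rw [hDH]
            exact hHcle
          have hDIci : D = Ici c := by
            apply Set.Subset.antisymm
            · intro z hz
              exact csInf_le hbdd hz
            · intro z hz
              exact hDup c hcD z hz
          have hinter : {ω | c ≤ Z ω} = ⋂ n : ℕ, {ω | c - 1/(n+1 : ℝ) < Z ω} := by
            ext ω
            simp only [Set.mem_setOf_eq, Set.mem_iInter]
            constructor
            · intro h n
              have hpos : (0:ℝ) < 1/(n+1 : ℝ) := by positivity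
              linarith
            · intro h
              by_contra hlt
              push_neg at hlt
              obtain ⟨n, hn⟩ := exists_nat_one_div_lt (sub_pos.2 hlt)
              have := h n
              linarith
          have hanti2 : Antitone (fun n : ℕ => {ω | c - 1/(n+1 : ℝ) < Z ω}) := by
            intro n m hnm ω hω
            have : 1/((m:ℝ)+1) ≤ 1/((n:ℝ)+1) := by
              apply one_div_le_one_div_of_le
              · positivity
              · exact_mod_cast (Nat.add_le_add_right hnm 1 : n + 1 ≤ m + 1)
            simp only [Set.mem_setOf_eq] at hω ⊢
            linarith
          have hlow : ENNReal.ofReal t ≤ μ {ω | c ≤ Z ω} := by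
            rw [hinter,
              hanti2.measure_iInter (fun n => (hmeasIoi _).nullMeasurableSet) ⟨0, hfin _⟩]
            refine le_iInf fun n => ?_
            have hpos : (0:ℝ) < 1/(n+1 : ℝ) := by positivity
            have hnD : c - 1/(n+1 : ℝ) ∉ D := by
              intro hmem
              have := csInf_le hbdd hmem
              rw [← hcdef] at this
              linarith
            rw [hDH] at hnD
            have : t < Hf (c - 1/(n+1 : ℝ)) := not_le.1 hnD
            rw [hHof]
            exact ENNReal.ofReal_le_ofReal this.le
          rw [hDIci]
          have hνIci : ν (Ici c) = μ {ω | c ≤ Z ω} := Measure.map_apply hZ measurableSet_Ici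
          rw [hνIci]
          refine le_antisymm ?_ hlow
          rw [hGof]
          exact ENNReal.ofReal_le_ofReal hcD
    · -- M = {c} : one atom straddles level t
      have hMc : M = {c} := hMsub.eq_singleton_of_mem hc
      have hcH : Hf c ≤ t := hc.1
      have hcG : t < Gf c := not_le.1 hc.2
      have ha : 0 < Gf c - Hf c := by linarith
      set r : ℝ := (t - Hf c) / (Gf c - Hf c) with hrdef
      have hr0 : 0 ≤ r := div_nonneg (by linarith) ha.le
      have hIeq : ∀ z, (if Gf z ≤ t then (1:ℝ≥0∞)
          else if Hf z ≤ t then ENNReal.ofReal ((t - Hf z) / (Gf z - Hf z)) else 0)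
          = D.indicator (fun _ => (1:ℝ≥0∞)) z
            + ({c} : Set ℝ).indicator (fun _ => ENNReal.ofReal r) z := by
        intro z
        by_cases hz : Gf z ≤ t
        · have hzc : z ≠ c := by
            intro h
            rw [h] at hz
            exact absurd hz hc.2
          rw [if_pos hz, Set.indicator_of_mem (show z ∈ D from hz),
            Set.indicator_of_notMem (by simpa using hzc : z ∉ ({c} : Set ℝ))]
          simp
        · by_cases hzc : z = c
          · subst hzc
            rw [if_neg hz, if_pos hcH, Set.indicator_of_notMem (show z ∉ D from hz),
              Set.indicator_of_mem (mem_singleton _)]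
            simp [hrdef]
          · have hz2 : ¬ Hf z ≤ t := by
              intro h2
              have : z ∈ M := ⟨h2, hz⟩
              rw [hMc] at this
              exact hzc this
            rw [if_neg hz, if_neg hz2, Set.indicator_of_notMem (show z ∉ D from hz),
              Set.indicator_of_notMem (by simpa using hzc : z ∉ ({c} : Set ℝ))]
            simp
      rw [lintegral_congr hIeq,
        lintegral_add_left ((measurable_const.indicator hDmeas)),
        lintegral_indicator_const hDmeas, lintegral_indicator_const (measurableSet_singleton c),
        one_mul]
      -- compute ν {c}
      have hsplitc : μ {ω | c ≤ Z ω} = μ {ω | Z ω = c} + μ {ω | c < Z ω} := by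
        have hun : {ω | c ≤ Z ω} = {ω | Z ω = c} ∪ {ω | c < Z ω} := by
          ext ω
          simp only [Set.mem_setOf_eq, Set.mem_union]
          constructor
          · intro h
            rcases eq_or_lt_of_le h with h' | h'
            · exact Or.inl h'.symm
            · exact Or.inr h'
          · rintro (h | h)
            · exact h.ge
            · exact h.le
        have hdisj : Disjoint {ω | Z ω = c} {ω | c < Z ω} := by
          rw [Set.disjoint_left]
          intro ω h1 h2
          simp only [Set.mem_setOf_eq] at h1 h2
          rw [h1] at h2
          exact lt_irrefl c h2
        rw [hun, measure_union hdisj (hmeasIoi c)]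
      have hatom : μ {ω | Z ω = c} = ENNReal.ofReal (Gf c - Hf c) := by
        have h1 : μ {ω | Z ω = c} = μ {ω | c ≤ Z ω} - μ {ω | c < Z ω} :=
          ENNReal.eq_sub_of_add_eq (hfin _) hsplitc.symm
        rw [h1, hGof, hHof, ← ENNReal.ofReal_sub _ (hH0 c)]
      have hνc : ν {c} = ENNReal.ofReal (Gf c - Hf c) := by
        rw [hν, Measure.map_apply hZ (measurableSet_singleton c)]
        exact hatom
      have hprod : ENNReal.ofReal r * ν {c} = ENNReal.ofReal (t - Hf c) := by
        rw [hνc, ← ENNReal.ofReal_mul hr0, hrdef]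
        congr 1
        field_simp
      -- D = Ioi c
      have hDIoi : D = Ioi c := by
        ext z
        simp only [hD, Set.mem_setOf_eq, Set.mem_Ioi]
        constructor
        · intro hz
          by_contra hle
          push_neg at hle
          exact absurd (le_trans (hGanti hle) hz) hc.2
        · intro hz
          exact le_trans (hgap hz) hcH
      have hνD2 : ν D = ENNReal.ofReal (Hf c) := by
        rw [hDIoi, hν, Measure.map_apply hZ measurableSet_Ioi]
        exact hHof c
      rw [hνD2, hprod, ← ENNReal.ofReal_add (hH0 c) (by linarith)]
      congr 1
      ring
  -- now construct g and conclude
  refine ⟨fun p => max p.1 (q (w p.1 p.2)), ?_, ?_, ?_⟩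
  · exact measurable_fst.max (hqmeas.comp (hwpmeas.comp (measurable_fst.prodMk measurable_snd)))
  · exact Filter.Eventually.of_forall fun ω => le_max_left _ _
  · intro x
    obtain ⟨hFx0, hFx1⟩ := hF01 x
    -- almost-sure facts
    have hN1 : ∀ᵐ ω ∂μ, V ω ∈ Ioo (0:ℝ) 1 := by
      rw [ae_iff]
      have h1 : μ (V ⁻¹' Ioo 0 1) = 1 := by
        rw [← Measure.map_apply hV measurableSet_Ioo, hVunif,
          Measure.restrict_apply measurableSet_Ioo,
          Set.inter_eq_left.2 Set.Ioo_subset_Icc_self, Real.volume_Ioo]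
        norm_num
      have h2 := measure_compl (μ := μ) (s := V ⁻¹' Ioo (0:ℝ) 1) (hV measurableSet_Ioo) (hfin _)
      rw [h1, measure_univ, tsub_self] at h2
      exact h2
    have hN2 : ∀ᵐ ω ∂μ, μ {ω' | Z ω ≤ Z ω'} ≠ 0 := by
      rw [ae_iff]
      simpa using TailBoundAux.null_upper μ Z
    have hN3 : ∀ᵐ ω ∂μ, μ {ω' | Z ω' ≤ Z ω} ≠ 0 := by
      rw [ae_iff]
      simpa using TailBoundAux.null_lower μ Z
    have hae : {ω | x ≤ max (Z ω) (q (w (Z ω) (V ω)))} =ᵐ[μ]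
        {ω | w (Z ω) (V ω) ≤ F x} := by
      rw [Filter.eventuallyEq_set]
      filter_upwards [hN1, hN2, hN3] with ω hVω hG' hH'
      set v : ℝ := V ω with hvdef
      set z : ℝ := Z ω with hzdef
      have hvI : v ∈ Icc (0:ℝ) 1 := Ioo_subset_Icc_self hVω
      have hclv : cl v = v := hclid v hvI
      have hGpos : 0 < Gf z := ENNReal.toReal_pos hG' (hfin _)
      have hHlt : Hf z < 1 := by
        have hne1 : μ {ω' | z < Z ω'} ≠ 1 := by
          intro h1
          have hcompl := measure_add_measure_compl (μ := μ) (hmeasIoi z)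
          rw [measure_univ, h1] at hcompl
          have hcompl2 : {ω' | z < Z ω'}ᶜ = {ω' | Z ω' ≤ z} := by
            ext ω'; simp [not_lt]
          rw [hcompl2] at hcompl
          exact hH' ((ENNReal.add_right_inj ENNReal.one_ne_top).1
            (hcompl.trans (add_zero (1:ℝ≥0∞)).symm))
        have hle1 : μ {ω' | z < Z ω'} ≤ 1 := prob_le_one
        have hlt1 : μ {ω' | z < Z ω'} < 1 := lt_of_le_of_ne hle1 hne1
        have h3 := (ENNReal.toReal_lt_toReal (hfin _) ENNReal.one_ne_top).2 hlt1
        simpa using h3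
      have hv0 : 0 < v := hVω.1
      have hv1 : v < 1 := hVω.2
      have hwzv : w z v = Hf z + v * (Gf z - Hf z) := by
        simp only [hw, hclv]
      have hu0 : 0 < w z v := by
        rw [hwzv]
        nlinarith [hHG z, hH0 z]
      have hu1 : w z v < 1 := by
        rw [hwzv]
        nlinarith [hHG z, hG1 z]
      have huG : w z v ≤ Gf z := hwG z v
      show x ≤ max z (q (w z v)) ↔ w z v ≤ F x
      constructor
      · intro hx
        rcases le_max_iff.1 hx with hxz | hxq
        · exact le_trans huG (le_trans (hdom z) (hFanti hxz))
        · exact (hgal (w z v) hu0 hu1 x).1 hxq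
      · intro h
        exact le_max_of_le_right ((hgal (w z v) hu0 hu1 x).2 h)
    have := measure_congr hae
    rw [show {ω | x ≤ max (Z ω) (q (w (Z ω) (V ω)))}
        = {ω | x ≤ (fun p : ℝ × ℝ => max p.1 (q (w p.1 p.2))) (Z ω, V ω)} from rfl] at this
    rw [this, key (F x) hFx0 hFx1, ENNReal.toReal_ofReal hFx0]
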